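/- Fix δ ∈ [1, 2]. Let (n_k) and (N_k) be sequences of positive integers with n_k → ∞, n_k + 1 ≤ N_k ≤ 2 n_k, and N_k / n_k → δ. Then (τ₂(n_k, N_k) − √2·N_k²) / N_k converges to −2·( 1 − δ − (1 − 3δ/2)/√2 ), where τ₂(n, N) = N·(2N(N−n−1) + (N−2)√(2nN(n−1)(N−2))) / (Nn + N − 4n). -/

import Mathlib

set_option maxHeartbeats 1000000


open Filter

/-- The degree-2 universal upper bound
`τ₂(n, N) = N·(2N(N−n−1) + (N−2)·√(2nN(n−1)(N−2))) / (Nn + N − 4n)`. -/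
noncomputable def tau2 (n N : ℕ) : ℝ :=
  (N : ℝ) * (2 * N * ((N : ℝ) - n - 1)
      + ((N : ℝ) - 2) * Real.sqrt (2 * n * N * ((n : ℝ) - 1) * ((N : ℝ) - 2)))
    / ((N : ℝ) * n + N - 4 * n)

noncomputable def Fq (t r : ℝ) : ℝ :=
  2*r^2 - 3*r^3 + t*(-4*r + 14*r^2 - r^3) + t^2*(-8 - 12*r) + 8*t^3

noncomputable def FF (t r : ℝ) : ℝ :=
  (2*r*(r - 1 - t)
    + 2*r*Fq t r /
      ((r - 2*t) * Real.sqrt (2*r*(1-t)*(r-2*t)) + Real.sqrt 2 * r * (r + r*t - 4*t)))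
  / (r + r*t - 4*t)

lemma eventual_eq (n N : ℕ) (hn : 2 ≤ n) (h1 : n + 1 ≤ N) (h2 : N ≤ 2*n) :
    (tau2 n N - Real.sqrt 2 * (N:ℝ)^2) / (N:ℝ) = FF ((n:ℝ))⁻¹ ((N:ℝ)/(n:ℝ)) := by
  have hm : (2:ℝ) ≤ (n:ℝ) := by exact_mod_cast hn
  have hM : (n:ℝ) + 1 ≤ (N:ℝ) := by exact_mod_cast h1
  have hM2 : (N:ℝ) ≤ 2*(n:ℝ) := by exact_mod_cast h2
  set m : ℝ := (n:ℝ) with hmdef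
  set M : ℝ := (N:ℝ) with hMdef
  have hm0 : (0:ℝ) < m := by linarith
  have hM0 : (0:ℝ) < M := by linarith
  have hM3 : (3:ℝ) ≤ M := by linarith
  have hE : (0:ℝ) < M*m + M - 4*m := by nlinarith
  have hc0 : (0:ℝ) ≤ 2*(M/m)*(1-m⁻¹)*(M/m-2*m⁻¹) := by
    have h1' : (0:ℝ) ≤ 1 - m⁻¹ := by
      rw [sub_nonneg, inv_le_one_iff₀]; right; linarith
    have h2' : (0:ℝ) ≤ M/m - 2*m⁻¹ := by
      rw [div_eq_mul_inv, sub_nonneg]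
      have : (2:ℝ) ≤ M := by linarith
      exact mul_le_mul_of_nonneg_right this (by positivity)
    positivity
  set s : ℝ := Real.sqrt (2*(M/m)*(1-m⁻¹)*(M/m-2*m⁻¹)) with hsdef
  have hs0 : 0 ≤ s := Real.sqrt_nonneg _
  have hs2 : (m^2)^2 * s^2 = 2*m*M*(m-1)*(M-2) := by
    rw [hsdef, Real.sq_sqrt hc0]; field_simp
  have hsqrt : Real.sqrt (2*m*M*(m-1)*(M-2)) = m^2 * s := by
    rw [show 2*m*M*(m-1)*(M-2) = (m^2)^2 * (2*(M/m)*(1-m⁻¹)*(M/m-2*m⁻¹)) from by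
      field_simp]
    rw [Real.sqrt_mul (sq_nonneg _), Real.sqrt_sq (sq_nonneg m), hsdef]
  have h2sq : Real.sqrt 2 ^ 2 = 2 := Real.sq_sqrt (by norm_num)
  have hS : (0:ℝ) < (M-2)*m^2*s + Real.sqrt 2 * M * (M*m + M - 4*m) := by
    have t1 : (0:ℝ) ≤ (M-2)*m^2*s := by
      apply mul_nonneg (mul_nonneg (by linarith) (sq_nonneg m)) hs0
    have t2 : (0:ℝ) < Real.sqrt 2 * M * (M*m + M - 4*m) := by
      apply mul_pos (mul_pos (Real.sqrt_pos.mpr (by norm_num)) hM0) hE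
    linarith
  have hkey : (M-2)*m^2*s - Real.sqrt 2 * M * (M*m + M - 4*m)
      = 2*M*(-M^3 + 8*m - 12*m*M + 14*m*M^2 - 3*m*M^3 - 8*m^2 - 4*m^2*M + 2*m^2*M^2)
        / ((M-2)*m^2*s + Real.sqrt 2 * M * (M*m + M - 4*m)) := by
    rw [eq_div_iff hS.ne']
    linear_combination (M-2)^2 * hs2 - (M^2*(M*m + M - 4*m)^2) * h2sq
  have hOden : (0:ℝ) < M/m + (M/m)*m⁻¹ - 4*m⁻¹ := by
    have : M/m + (M/m)*m⁻¹ - 4*m⁻¹ = (M*m + M - 4*m)/m^2 := by field_simp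
    rw [this]; positivity
  rw [tau2, FF, Fq]
  rw [show (2*(n:ℕ)*(N:ℕ)*((n:ℝ)-1)*((N:ℝ)-2) : ℝ) = 2*m*M*(m-1)*(M-2) from by
    push_cast; ring]
  rw [hsqrt, ← hsdef]
  simp only [← hmdef, ← hMdef]
  have step1 : (M*(2*M*(M-m-1) + (M-2)*(m^2*s))/(M*m+M-4*m) - Real.sqrt 2 * M^2)/M
      = (2*M*(M-m-1) + ((M-2)*m^2*s - Real.sqrt 2 * M * (M*m+M-4*m)))/(M*m+M-4*m) := by
    have hE' : M * (m + 1) - m * 4 ≠ 0 := by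
      have : M * (m + 1) - m * 4 = M*m+M-4*m := by ring
      rw [this]; exact hE.ne'
    field_simp
    ring
  have hSden : ((M/m - 2*m⁻¹) * s + Real.sqrt 2 * (M/m) * (M/m + (M/m)*m⁻¹ - 4*m⁻¹)) ≠ 0 := by
    have : (M/m - 2*m⁻¹) * s + Real.sqrt 2 * (M/m) * (M/m + (M/m)*m⁻¹ - 4*m⁻¹)
        = ((M-2)*m^2*s + Real.sqrt 2 * M * (M*m + M - 4*m)) / m^3 := by
      field_simp
    rw [this]
    positivity
  have hSdenEq : (M/m - 2*m⁻¹) * s + Real.sqrt 2 * (M/m) * (M/m + (M/m)*m⁻¹ - 4*m⁻¹)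
      = ((M-2)*m^2*s + Real.sqrt 2 * M * (M*m + M - 4*m)) / m^3 := by
    field_simp
  have hinner : 2*(M/m)*(2*(M/m)^2 - 3*(M/m)^3 + m⁻¹*(-4*(M/m) + 14*(M/m)^2 - (M/m)^3)
            + m⁻¹^2*(-8 - 12*(M/m)) + 8*m⁻¹^3) /
          ((M/m - 2*m⁻¹) * s + Real.sqrt 2 * (M/m) * (M/m + (M/m)*m⁻¹ - 4*m⁻¹))
      = 2*M*(-M^3 + 8*m - 12*m*M + 14*m*M^2 - 3*m*M^3 - 8*m^2 - 4*m^2*M + 2*m^2*M^2)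
          / (m^2 * ((M-2)*m^2*s + Real.sqrt 2 * M * (M*m + M - 4*m))) := by
    rw [hSdenEq, div_div_eq_mul_div]
    rw [show 2*(M/m)*(2*(M/m)^2 - 3*(M/m)^3 + m⁻¹*(-4*(M/m) + 14*(M/m)^2 - (M/m)^3)
            + m⁻¹^2*(-8 - 12*(M/m)) + 8*m⁻¹^3) * m^3
        = 2*M*(-M^3 + 8*m - 12*m*M + 14*m*M^2 - 3*m*M^3 - 8*m^2 - 4*m^2*M + 2*m^2*M^2)/m^2
        from by field_simp; ring]
    rw [div_div]
  have step2 : (2*(M/m)*(M/m - 1 - m⁻¹) +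
        2*(M/m)*(2*(M/m)^2 - 3*(M/m)^3 + m⁻¹*(-4*(M/m) + 14*(M/m)^2 - (M/m)^3)
            + m⁻¹^2*(-8 - 12*(M/m)) + 8*m⁻¹^3) /
          ((M/m - 2*m⁻¹) * s + Real.sqrt 2 * (M/m) * (M/m + (M/m)*m⁻¹ - 4*m⁻¹))) /
        (M/m + (M/m)*m⁻¹ - 4*m⁻¹)
      = (2*M*(M-m-1)
          + 2*M*(-M^3 + 8*m - 12*m*M + 14*m*M^2 - 3*m*M^3 - 8*m^2 - 4*m^2*M + 2*m^2*M^2)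
            / ((M-2)*m^2*s + Real.sqrt 2 * M * (M*m + M - 4*m)))
        / (M*m+M-4*m) := by
    rw [hinner, div_eq_div_iff hOden.ne' hE.ne']
    field_simp
  rw [step1, hkey, ← step2]

lemma FF_val (δ : ℝ) (hδ1 : 1 ≤ δ) :
    FF 0 δ = -2*(1 - δ - (1 - 3*δ/2)/Real.sqrt 2) := by
  have hδ0 : (0:ℝ) < δ := by linarith
  have h2 : (0:ℝ) < Real.sqrt 2 := Real.sqrt_pos.mpr (by norm_num)
  have h2sq : Real.sqrt 2 ^ 2 = 2 := Real.sq_sqrt (by norm_num)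
  rw [FF, Fq]
  rw [show 2*δ*(1-(0:ℝ))*(δ-2*0) = 2*δ^2 from by ring]
  rw [show Real.sqrt (2*δ^2) = Real.sqrt 2 * δ from by
    rw [Real.sqrt_mul (by norm_num : (0:ℝ) ≤ 2), Real.sqrt_sq hδ0.le]]
  have hden : (δ - 2*0) * (Real.sqrt 2 * δ) + Real.sqrt 2 * δ * (δ + δ*0 - 4*0) ≠ 0 := by
    have : (δ - 2*0) * (Real.sqrt 2 * δ) + Real.sqrt 2 * δ * (δ + δ*0 - 4*0)
        = 2 * Real.sqrt 2 * δ^2 := by ring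
    rw [this]; positivity
  field_simp
  ring_nf
  field_simp
  ring

lemma tendsto_FF (δ : ℝ) (hδ1 : 1 ≤ δ) (t r : ℕ → ℝ)
    (ht : Tendsto t atTop (nhds 0)) (hr : Tendsto r atTop (nhds δ)) :
    Tendsto (fun k => FF (t k) (r k)) atTop
      (nhds (-2*(1 - δ - (1 - 3*δ/2)/Real.sqrt 2))) := by
  have hδ0 : (0:ℝ) < δ := by linarith
  have hcont : ContinuousAt (fun p : ℝ × ℝ => FF p.1 p.2) (0, δ) := by
    unfold FF Fq
    apply ContinuousAt.div
    · apply ContinuousAt.add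
      · fun_prop
      · apply ContinuousAt.div
        · fun_prop
        · fun_prop
        · show (δ - 2*0) * Real.sqrt (2*δ*(1-0)*(δ-2*0)) + Real.sqrt 2 * δ * (δ + δ*0 - 4*0) ≠ 0
          have h1 : (0:ℝ) < Real.sqrt (2*δ*(1-0)*(δ-2*0)) := by
            apply Real.sqrt_pos.mpr; nlinarith
          have h2 : (0:ℝ) < Real.sqrt 2 := Real.sqrt_pos.mpr (by norm_num)
          have t1 : (0:ℝ) < (δ - 2*0) * Real.sqrt (2*δ*(1-0)*(δ-2*0)) := by
            apply mul_pos (by linarith) h1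
          have t2 : (0:ℝ) < Real.sqrt 2 * δ * (δ + δ*0 - 4*0) := by
            have e : δ + δ*0 - 4*0 = δ := by ring
            rw [e]; positivity
          exact ne_of_gt (by linarith)
    · fun_prop
    · show δ + δ*0 - 4*0 ≠ 0
      simp; linarith
  have := (hcont.tendsto).comp (ht.prodMk_nhds hr)
  rw [← FF_val δ hδ1]
  exact this


/-- Asymptotics of the degree-2 bound in the regime `N_k ∼ δ n_k`, `1 ≤ δ ≤ 2`:
`(τ₂(n_k, N_k) − √2·N_k²)/N_k → −2(1 − δ − (1 − 3δ/2)/√2)`. -/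
theorem tau2_asymptotics (δ : ℝ) (hδ1 : 1 ≤ δ) (hδ2 : δ ≤ 2)
    (n N : ℕ → ℕ) (hn : ∀ k, 0 < n k) (hN : ∀ k, 0 < N k)
    (hn_top : Tendsto (fun k => (n k : ℝ)) atTop atTop)
    (hNn1 : ∀ k, n k + 1 ≤ N k) (hNn2 : ∀ k, N k ≤ 2 * n k)
    (hratio : Tendsto (fun k => (N k : ℝ) / (n k : ℝ)) atTop (nhds δ)) :
    Tendsto (fun k => (tau2 (n k) (N k) - Real.sqrt 2 * (N k : ℝ) ^ 2) / (N k : ℝ))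
      atTop (nhds (-2 * (1 - δ - (1 - 3 * δ / 2) / Real.sqrt 2))) := by

  have ht : Tendsto (fun k => ((n k : ℝ))⁻¹) atTop (nhds 0) :=
    hn_top.inv_tendsto_atTop
  have hFF := tendsto_FF δ hδ1 (fun k => ((n k : ℝ))⁻¹) (fun k => (N k : ℝ) / (n k : ℝ))
    ht hratio
  have heq : ∀ᶠ k in atTop,
      FF ((n k : ℝ))⁻¹ ((N k : ℝ) / (n k : ℝ))
        = (tau2 (n k) (N k) - Real.sqrt 2 * (N k : ℝ) ^ 2) / (N k : ℝ) := by
    have h2 : ∀ᶠ k in atTop, (2:ℝ) ≤ (n k : ℝ) := hn_top.eventually_ge_atTop 2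
    filter_upwards [h2] with k hk
    have hk' : 2 ≤ n k := by exact_mod_cast hk
    exact (eventual_eq (n k) (N k) hk' (hNn1 k) (hNn2 k)).symm
  have : Tendsto (fun k => (tau2 (n k) (N k) - Real.sqrt 2 * (N k : ℝ) ^ 2) / (N k : ℝ))
      atTop (nhds (-2*(1 - δ - (1 - 3*δ/2)/Real.sqrt 2))) := hFF.congr' heq
  exact this
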